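/- Any sample Fréchet mean Ā and sample Fréchet median M computed with the adjacency spectral pseudometric satisfy max{e(Ā), e(M)} ≤ 9·ē_N, where ē_N is the sample mean number of edges of the sample graphs (assuming there exists k₀ with ‖λ(A^{(k₀)})‖ ≤ ‖λ̄‖). -/

import Mathlib

open Finset

/-- `A` is the adjacency matrix of a simple labeled graph on `n` vertices:
symmetric, `{0,1}`-valued, zero diagonal. -/
def IsAdj {n : ℕ} (A : Matrix (Fin n) (Fin n) ℝ) : Prop :=
  (∀ i j, A i j = 0 ∨ A i j = 1) ∧ (∀ i j, A i j = A j i) ∧ (∀ i, A i i = 0)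

/-- Number of edges `e(A) = ∑_{i<j} a_{ij}`. -/
def edges {n : ℕ} (A : Matrix (Fin n) (Fin n) ℝ) : ℝ :=
  ∑ i : Fin n, ∑ j : Fin n, if i < j then A i j else 0

/-- Hamming distance `d_H(A,B) = ∑_{i<j} |a_{ij} - b_{ij}|`. -/
def hammingD {n : ℕ} (A B : Matrix (Fin n) (Fin n) ℝ) : ℝ :=
  ∑ i : Fin n, ∑ j : Fin n, if i < j then |A i j - B i j| else 0

/-- Euclidean norm of a vector in `ℝⁿ`. -/
noncomputable def vnorm {n : ℕ} (v : Fin n → ℝ) : ℝ :=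
  Real.sqrt (∑ i : Fin n, v i ^ 2)

noncomputable def toE {n : ℕ} (v : Fin n → ℝ) : EuclideanSpace ℝ (Fin n) :=
  (WithLp.equiv 2 (Fin n → ℝ)).symm v

lemma vnorm_eq {n : ℕ} (v : Fin n → ℝ) : vnorm v = ‖toE v‖ := by
  rw [EuclideanSpace.norm_eq]
  simp [vnorm, toE, Real.norm_eq_abs, sq_abs]

lemma toE_sub {n : ℕ} (u v : Fin n → ℝ) : toE (u - v) = toE u - toE v := rfl

lemma vnorm_sq {n : ℕ} (v : Fin n → ℝ) : vnorm v ^ 2 = ∑ i : Fin n, v i ^ 2 :=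
  Real.sq_sqrt (Finset.sum_nonneg fun i _ => sq_nonneg _)

lemma vnorm_neg {n : ℕ} (v : Fin n → ℝ) : vnorm (-v) = vnorm v := by
  simp [vnorm]

lemma sum_eigenvalues_sq {n : ℕ} (A : Matrix (Fin n) (Fin n) ℝ) (hA : A.IsHermitian) :
    ∑ i, hA.eigenvalues i ^ 2 = (A * A).trace := by
  have hU : (star (hA.eigenvectorUnitary : Matrix (Fin n) (Fin n) ℝ)) *
      (hA.eigenvectorUnitary : Matrix (Fin n) (Fin n) ℝ) = 1 :=
    (Matrix.mem_unitaryGroup_iff').mp (hA.eigenvectorUnitary).2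
  set U := (hA.eigenvectorUnitary : Matrix (Fin n) (Fin n) ℝ) with hUdef
  set D := Matrix.diagonal ((RCLike.ofReal : ℝ → ℝ) ∘ hA.eigenvalues) with hDdef
  have hsp : A = U * D * star U := hA.spectral_theorem
  have key : A * A = U * (D * D) * star U := by
    rw [hsp]
    simp only [Matrix.mul_assoc]
    rw [← Matrix.mul_assoc (star U) U, hU, Matrix.one_mul]
  rw [key, Matrix.trace_mul_comm, ← Matrix.mul_assoc, hU, Matrix.one_mul]
  rw [hDdef, Matrix.diagonal_mul_diagonal, Matrix.trace_diagonal]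
  simp [sq]

lemma trace_sq_adj {n : ℕ} (A : Matrix (Fin n) (Fin n) ℝ) (h : IsAdj A) :
    (A * A).trace = 2 * edges A := by
  obtain ⟨h01, hsym, hdiag⟩ := h
  have h1 : (A * A).trace = ∑ i : Fin n, ∑ j : Fin n, A i j := by
    rw [Matrix.trace]
    simp only [Matrix.diag, Matrix.mul_apply]
    refine Finset.sum_congr rfl fun i _ => Finset.sum_congr rfl fun j _ => ?_
    rw [← hsym i j]
    rcases h01 i j with h | h <;> rw [h] <;> ring
  rw [h1]
  have h2 : ∀ i j : Fin n, A i j =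
      (if i < j then A i j else 0) + (if j < i then A i j else 0) := by
    intro i j
    rcases lt_trichotomy i j with h | h | h
    · simp [h, asymm h]
    · simp [h, hdiag]
    · simp [h, asymm h]
  calc ∑ i : Fin n, ∑ j : Fin n, A i j
      = edges A + ∑ i : Fin n, ∑ j : Fin n, (if j < i then A i j else 0) := by
        rw [edges, ← Finset.sum_add_distrib]
        refine Finset.sum_congr rfl fun i _ => ?_
        rw [← Finset.sum_add_distrib]
        exact Finset.sum_congr rfl fun j _ => h2 i j
    _ = 2 * edges A := by
        have : ∑ i : Fin n, ∑ j : Fin n, (if j < i then A i j else 0) = edges A := by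
          rw [Finset.sum_comm]
          refine Finset.sum_congr rfl fun j _ => Finset.sum_congr rfl fun i _ => ?_
          rw [hsym]
        rw [this]; ring

lemma eigen_norm_sq {n : ℕ} (A : Matrix (Fin n) (Fin n) ℝ) (h : IsAdj A)
    (hA : A.IsHermitian) : ‖toE hA.eigenvalues‖ ^ 2 = 2 * edges A := by
  rw [← vnorm_eq, vnorm_sq, sum_eigenvalues_sq, trace_sq_adj A h]

lemma edges_nonneg {n : ℕ} (A : Matrix (Fin n) (Fin n) ℝ) (h : IsAdj A) :
    0 ≤ edges A := by
  refine Finset.sum_nonneg fun i _ => Finset.sum_nonneg fun j _ => ?_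
  rcases h.1 i j with h' | h' <;> simp [h'] <;> positivity

lemma isAdj_zero {n : ℕ} : IsAdj (0 : Matrix (Fin n) (Fin n) ℝ) :=
  ⟨fun _ _ => Or.inl rfl, fun _ _ => rfl, fun _ => rfl⟩

lemma eigenvalues_zero {n : ℕ} (h0 : (0 : Matrix (Fin n) (Fin n) ℝ).IsHermitian) :
    h0.eigenvalues = 0 := by
  have := sum_eigenvalues_sq 0 h0
  simp only [Matrix.mul_zero, Matrix.trace_zero] at this
  funext i
  have h := (Finset.sum_eq_zero_iff_of_nonneg (fun i _ => sq_nonneg _)).mp this i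
    (Finset.mem_univ i)
  have := pow_eq_zero_iff (n := 2) (by norm_num) |>.mp h
  simpa using this

lemma toE_sum {n N : ℕ} (f : Fin N → (Fin n → ℝ)) :
    toE (fun i => ∑ k : Fin N, f k i) = ∑ k : Fin N, toE (f k) := by
  have : (fun i => ∑ k : Fin N, f k i) = ∑ k : Fin N, f k := by
    funext i; simp
  rw [this]
  exact map_sum (WithLp.linearEquiv 2 ℝ (Fin n → ℝ)).symm f Finset.univ

set_option maxHeartbeats 1000000 in
theorem spectral_mean_median_edges_bound {n N : ℕ} (hN : 0 < N)
    (A : Fin N → Matrix (Fin n) (Fin n) ℝ) (hadj : ∀ k, IsAdj (A k))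
    (hA : ∀ k, (A k).IsHermitian)
    (Abar : Matrix (Fin n) (Fin n) ℝ) (hAbaradj : IsAdj Abar)
    (hAbar : Abar.IsHermitian)
    (hmean : ∀ (B : Matrix (Fin n) (Fin n) ℝ), IsAdj B → ∀ hB : B.IsHermitian,
      ∑ k : Fin N, (vnorm (hAbar.eigenvalues - (hA k).eigenvalues)) ^ 2 ≤
        ∑ k : Fin N, (vnorm (hB.eigenvalues - (hA k).eigenvalues)) ^ 2)
    (M : Matrix (Fin n) (Fin n) ℝ) (hMadj : IsAdj M) (hM : M.IsHermitian)
    (hmed : ∀ (B : Matrix (Fin n) (Fin n) ℝ), IsAdj B → ∀ hB : B.IsHermitian,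
      ∑ k : Fin N, vnorm (hM.eigenvalues - (hA k).eigenvalues) ≤
        ∑ k : Fin N, vnorm (hB.eigenvalues - (hA k).eigenvalues))
    (hk₀ : ∃ k₀ : Fin N, vnorm ((hA k₀).eigenvalues) ≤
      vnorm (fun i => (1 : ℝ) / N * ∑ k : Fin N, (hA k).eigenvalues i)) :
    max (edges Abar) (edges M) ≤
      9 * ((1 : ℝ) / N * ∑ k : Fin N, edges (A k)) := by
  set Nr : ℝ := (N : ℝ) with hNrdef
  have hNr : (0 : ℝ) < Nr := by rw [hNrdef]; exact_mod_cast hN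
  set E : ℝ := ∑ k : Fin N, edges (A k) with hEdef
  have hE : 0 ≤ E := Finset.sum_nonneg fun k _ => edges_nonneg _ (hadj k)
  set y : Fin N → EuclideanSpace ℝ (Fin n) := fun k => toE ((hA k).eigenvalues) with hydef
  set x : EuclideanSpace ℝ (Fin n) := toE hAbar.eigenvalues with hxdef
  set z : EuclideanSpace ℝ (Fin n) := toE hM.eigenvalues with hzdef
  set S : ℝ := ∑ k : Fin N, ‖y k‖ with hSdef
  have hS : 0 ≤ S := Finset.sum_nonneg fun k _ => norm_nonneg _
  have hyk : ∀ k, ‖y k‖ ^ 2 = 2 * edges (A k) := fun k =>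
    eigen_norm_sq (A k) (hadj k) (hA k)
  have hT : ∑ k : Fin N, ‖y k‖ ^ 2 = 2 * E := by
    rw [hEdef, Finset.mul_sum]
    exact Finset.sum_congr rfl fun k _ => hyk k
  -- Cauchy–Schwarz: S^2 ≤ Nr * (2E)
  have hCS : S ^ 2 ≤ Nr * (2 * E) := by
    have := sq_sum_le_card_mul_sum_sq (s := (Finset.univ : Finset (Fin N)))
      (f := fun k => ‖y k‖)
    rw [hT] at this
    simpa [hSdef] using this
  -- Mean part
  have hmean0 := hmean 0 isAdj_zero Matrix.isHermitian_zero
  have h1 : ∑ k : Fin N, ‖x - y k‖ ^ 2 ≤ 2 * E := by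
    rw [← hT]
    calc ∑ k : Fin N, ‖x - y k‖ ^ 2
        = ∑ k : Fin N, (vnorm (hAbar.eigenvalues - (hA k).eigenvalues)) ^ 2 := by
          refine Finset.sum_congr rfl fun k _ => ?_
          rw [vnorm_eq, toE_sub]
      _ ≤ ∑ k : Fin N, (vnorm ((Matrix.isHermitian_zero).eigenvalues
            - (hA k).eigenvalues)) ^ 2 := hmean0
      _ = ∑ k : Fin N, ‖y k‖ ^ 2 := by
          refine Finset.sum_congr rfl fun k _ => ?_
          rw [eigenvalues_zero, zero_sub, vnorm_neg, vnorm_eq]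
  have hmeanbound : edges Abar ≤ 9 * ((1 : ℝ) / Nr * E) := by
    have hx2 : ‖x‖ ^ 2 = 2 * edges Abar := eigen_norm_sq Abar hAbaradj hAbar
    have hexp : ∑ k : Fin N, ‖x - y k‖ ^ 2
        = Nr * ‖x‖ ^ 2 - 2 * inner ℝ x (∑ k : Fin N, y k) + ∑ k : Fin N, ‖y k‖ ^ 2 := by
      simp only [norm_sub_sq_real, Finset.sum_add_distrib, Finset.sum_sub_distrib,
        Finset.sum_const, Finset.card_univ, Fintype.card_fin, nsmul_eq_mul,
        inner_sum, Finset.mul_sum, hNrdef]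
    have h2 : Nr * ‖x‖ ^ 2 ≤ 2 * (‖x‖ * S) := by
      have hi : inner ℝ x (∑ k : Fin N, y k) ≤ ‖x‖ * S := by
        calc (inner ℝ x (∑ k : Fin N, y k) : ℝ) ≤ ‖x‖ * ‖∑ k : Fin N, y k‖ :=
              real_inner_le_norm x _
          _ ≤ ‖x‖ * S := by
              exact mul_le_mul_of_nonneg_left (norm_sum_le _ _) (norm_nonneg _)
      rw [hexp, hT] at h1
      linarith
    rcases eq_or_lt_of_le (norm_nonneg x) with hx0 | hx0
    · have : edges Abar = 0 := by nlinarith [hx2]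
      rw [this]
      positivity
    · have h5 : Nr * ‖x‖ ≤ 2 * S := by
        have : (Nr * ‖x‖) * ‖x‖ ≤ (2 * S) * ‖x‖ := by nlinarith [h2]
        exact le_of_mul_le_mul_right this hx0
      have h6 : (Nr * ‖x‖) ^ 2 ≤ (2 * S) ^ 2 :=
        pow_le_pow_left₀ (mul_nonneg hNr.le (norm_nonneg _)) h5 2
      have e1 : Nr ^ 2 * ‖x‖ ^ 2 ≤ 4 * S ^ 2 := by nlinarith [h6]
      have e2 : 4 * S ^ 2 ≤ 8 * (Nr * E) := by linarith
      have e3 : Nr * (Nr * edges Abar) ≤ Nr * (4 * E) := by nlinarith [e1, e2, hx2]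
      have e4 : Nr * edges Abar ≤ 4 * E := le_of_mul_le_mul_left e3 hNr
      have hr : 9 * ((1 : ℝ) / Nr * E) = 9 * E / Nr := by ring
      rw [hr, le_div_iff₀ hNr]
      nlinarith [e4, hE]
  -- Median part
  obtain ⟨k₀, hk₀⟩ := hk₀
  have hmed0 := hmed (A k₀) (hadj k₀) (hA k₀)
  have havg : vnorm (fun i => (1 : ℝ) / N * ∑ k : Fin N, (hA k).eigenvalues i)
      ≤ S / Nr := by
    have heq : (fun i => (1 : ℝ) / N * ∑ k : Fin N, (hA k).eigenvalues i)
        = ((1 : ℝ) / Nr) • (fun i => ∑ k : Fin N, (hA k).eigenvalues i) := rfl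
    rw [heq, vnorm_eq]
    have : toE (((1 : ℝ) / Nr) • (fun i => ∑ k : Fin N, (hA k).eigenvalues i))
        = ((1 : ℝ) / Nr) • toE (fun i => ∑ k : Fin N, (hA k).eigenvalues i) := rfl
    rw [this, toE_sum, norm_smul]
    have hnormsum : ‖∑ k : Fin N, y k‖ ≤ S := norm_sum_le _ _
    have : ‖(1 : ℝ) / Nr‖ = 1 / Nr := by
      rw [Real.norm_eq_abs, abs_of_pos (by positivity)]
    rw [this, div_mul_eq_mul_div, one_mul, div_le_div_iff₀ hNr hNr]
    calc ‖∑ k : Fin N, y k‖ * Nr ≤ S * Nr :=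
          mul_le_mul_of_nonneg_right hnormsum (le_of_lt hNr)
      _ = S * Nr := rfl
  have hmedbound : edges M ≤ 9 * ((1 : ℝ) / Nr * E) := by
    have hz2 : ‖z‖ ^ 2 = 2 * edges M := eigen_norm_sq M hMadj hM
    have h10 : Nr * ‖z‖ ≤ 3 * S := by
      have hstep1 : Nr * ‖z‖ ≤ ∑ k : Fin N, ‖z - y k‖ + S := by
        have : Nr * ‖z‖ = ∑ _k : Fin N, ‖z‖ := by
          simp [Finset.sum_const, Finset.card_univ, mul_comm, hNrdef]
        rw [this, hSdef, ← Finset.sum_add_distrib]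
        refine Finset.sum_le_sum fun k _ => ?_
        calc ‖z‖ = ‖(z - y k) + y k‖ := by rw [sub_add_cancel]
          _ ≤ ‖z - y k‖ + ‖y k‖ := norm_add_le _ _
      have hstep2 : ∑ k : Fin N, ‖z - y k‖ ≤ ∑ k : Fin N, ‖y k₀ - y k‖ := by
        calc ∑ k : Fin N, ‖z - y k‖
            = ∑ k : Fin N, vnorm (hM.eigenvalues - (hA k).eigenvalues) := by
              refine Finset.sum_congr rfl fun k _ => ?_
              rw [vnorm_eq, toE_sub]
          _ ≤ ∑ k : Fin N, vnorm ((hA k₀).eigenvalues - (hA k).eigenvalues) := hmed0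
          _ = ∑ k : Fin N, ‖y k₀ - y k‖ := by
              refine Finset.sum_congr rfl fun k _ => ?_
              rw [vnorm_eq, toE_sub]
      have hstep3 : ∑ k : Fin N, ‖y k₀ - y k‖ ≤ Nr * ‖y k₀‖ + S := by
        have : Nr * ‖y k₀‖ + S = ∑ k : Fin N, (‖y k₀‖ + ‖y k‖) := by
          rw [Finset.sum_add_distrib]
          simp [hSdef, Finset.sum_const, Finset.card_univ, mul_comm, hNrdef]
        rw [this]
        exact Finset.sum_le_sum fun k _ => norm_sub_le _ _
      have hstep4 : ‖y k₀‖ ≤ S / Nr := by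
        calc ‖y k₀‖ = vnorm ((hA k₀).eigenvalues) := (vnorm_eq _).symm
          _ ≤ _ := hk₀
          _ ≤ S / Nr := havg
      have : Nr * ‖y k₀‖ ≤ S := (le_div_iff₀' hNr).mp hstep4
      linarith
    have h11 : (Nr * ‖z‖) ^ 2 ≤ (3 * S) ^ 2 :=
      pow_le_pow_left₀ (mul_nonneg hNr.le (norm_nonneg _)) h10 2
    have e1 : Nr ^ 2 * ‖z‖ ^ 2 ≤ 9 * S ^ 2 := by nlinarith [h11]
    have e2 : 9 * S ^ 2 ≤ 18 * (Nr * E) := by linarith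
    have e3 : Nr * (Nr * edges M) ≤ Nr * (9 * E) := by nlinarith [e1, e2, hz2]
    have e4 : Nr * edges M ≤ 9 * E := le_of_mul_le_mul_left e3 hNr
    have hr : 9 * ((1 : ℝ) / Nr * E) = 9 * E / Nr := by ring
    rw [hr, le_div_iff₀ hNr]
    nlinarith [e4]
  exact max_le hmeanbound hmedbound
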